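/- Let M be an n×n integer matrix and X = (x_{ij}) an n×n matrix of indeterminates. For any pair of ordered index tuples u = (u1, u2), w = (w1, w2) with u1 ≠ u2 and w1 ≠ w2, the coefficient of x_{u1 w1}·x_{u2 w2} in det(X - M) equals (-1)^{n-2} times the signed ordered second cofactor of M obtained by deleting rows u1, u2 and columns w1, w2 with the appropriate positional signs (i.e., (-1)^{pos(u1)+pos(w1)} times (-1)^{pos'(u2)+pos'(w2)} times det of the remaining (n-2)×(n-2) submatrix of M). -/
import Mathlib

/-- The position of index `b` in the minor obtained by deleting row/column `a`
(meaningful whenever `b ≠ a`). -/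
def posAfter {m : ℕ} (a b : Fin (m + 2)) : Fin (m + 1) :=
  if a.val < b.val then ⟨b.val - 1, by have := b.isLt; omega⟩
  else ⟨min b.val m, by omega⟩

lemma succAbove_posAfter {m : ℕ} (a b : Fin (m + 2)) (h : b ≠ a) :
    a.succAbove (posAfter a b) = b := by
  have hb := b.isLt
  have ha := a.isLt
  have hne : b.val ≠ a.val := fun hc => h (Fin.ext hc)
  unfold posAfter
  rcases Nat.lt_or_ge a.val b.val with hlt | hge
  · rw [if_pos hlt, Fin.succAbove_of_le_castSucc]
    · exact Fin.ext (by rw [Fin.val_succ]; show b.val - 1 + 1 = b.val; omega)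
    · rw [Fin.le_def, Fin.coe_castSucc]; show a.val ≤ b.val - 1; omega
  · have hgt : b.val < a.val := by omega
    rw [if_neg (by omega), Fin.succAbove_of_castSucc_lt]
    · exact Fin.ext (by rw [Fin.coe_castSucc]; show min b.val m = b.val; omega)
    · rw [Fin.lt_def, Fin.coe_castSucc]; show min b.val m < a.val; omega

private lemma prod_X_eq_monomial {R : Type*} [CommSemiring R] {σs ι : Type*}
    [DecidableEq σs] [DecidableEq ι] (t : Finset ι) (p : ι → σs) :
    (∏ i ∈ t, (MvPolynomial.X (p i) : MvPolynomial σs R)) =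
      MvPolynomial.monomial (∑ i ∈ t, Finsupp.single (p i) 1) 1 := by
  classical
  refine Finset.induction_on t (by simp) ?_
  intro a s ha ih
  rw [Finset.prod_insert ha, ih, Finset.sum_insert ha,
    ← pow_one (MvPolynomial.X (p a) : MvPolynomial σs R), MvPolynomial.X_pow_eq_monomial,
    MvPolynomial.monomial_mul, one_mul]

theorem coeff_total_minor_eq_second_cofactor {m : ℕ}
    (M : Matrix (Fin (m + 2)) (Fin (m + 2)) ℤ) (u1 u2 w1 w2 : Fin (m + 2))
    (hu : u1 ≠ u2) (hw : w1 ≠ w2) :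
    MvPolynomial.coeff
        (Finsupp.single (u1, w1) 1 + Finsupp.single (u2, w2) 1)
        (Matrix.det
          ((Matrix.of fun i j : Fin (m + 2) =>
              (MvPolynomial.X (i, j) : MvPolynomial (Fin (m + 2) × Fin (m + 2)) ℤ)) -
            M.map MvPolynomial.C)) =
      (-1 : ℤ) ^ m *
        ((-1 : ℤ) ^ (u1.val + w1.val) *
          ((-1 : ℤ) ^ ((posAfter u1 u2).val + (posAfter w1 w2).val) *
            Matrix.det
              (M.submatrix (u1.succAbove ∘ (posAfter u1 u2).succAbove)
                (w1.succAbove ∘ (posAfter w1 w2).succAbove)))) := by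
  classical
  have hu' : u2 ≠ u1 := hu.symm
  have hw' : w2 ≠ w1 := hw.symm
  set N : Matrix (Fin (m + 2)) (Fin (m + 2)) (MvPolynomial (Fin (m + 2) × Fin (m + 2)) ℤ) :=
    (Matrix.of fun i j : Fin (m + 2) =>
      (MvPolynomial.X (i, j) : MvPolynomial (Fin (m + 2) × Fin (m + 2)) ℤ)) -
      M.map MvPolynomial.C with hN
  set d : (Fin (m + 2) × Fin (m + 2)) →₀ ℕ :=
    Finsupp.single (u1, w1) 1 + Finsupp.single (u2, w2) 1 with hd
  set A : Matrix (Fin (m + 2)) (Fin (m + 2)) ℤ :=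
    ((-M).updateRow u1 (Pi.single w1 1)).updateRow u2 (Pi.single w2 1) with hA
  have hAu2 : A u2 = Pi.single w2 1 := Matrix.updateRow_self
  have hAu1 : A u1 = Pi.single w1 1 := by
    rw [hA, Matrix.updateRow_ne hu, Matrix.updateRow_self]
  have hAother : ∀ i, i ≠ u1 → i ≠ u2 → A i = fun j => -(M i j) := by
    intro i h1 h2
    rw [hA, Matrix.updateRow_ne h2, Matrix.updateRow_ne h1]
    rfl
  have hd1 : d (u1, w1) = 1 := by
    simp [hd, Finsupp.add_apply, Finsupp.single_apply, Prod.ext_iff, hw']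
  have hd2 : d (u2, w2) = 1 := by
    simp [hd, Finsupp.add_apply, Finsupp.single_apply, Prod.ext_iff, hw]
  have hd0 : ∀ u w : Fin (m + 2), w ≠ w1 → w ≠ w2 → d (u, w) = 0 := by
    intro u w hw1 hw2
    simp [hd, Finsupp.add_apply, Finsupp.single_apply, Prod.ext_iff, Ne.symm hw1, Ne.symm hw2]
  have hcond : ∀ (σ : Equiv.Perm (Fin (m + 2))) (t : Finset (Fin (m + 2))),
      (∑ i ∈ t, Finsupp.single ((σ i, i) : Fin (m + 2) × Fin (m + 2)) (1 : ℕ)) = d ↔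
        σ w1 = u1 ∧ σ w2 = u2 ∧ t = {w1, w2} := by
    intro σ t
    have happ : ∀ u w : Fin (m + 2),
        (∑ i ∈ t, Finsupp.single ((σ i, i) : Fin (m + 2) × Fin (m + 2)) (1 : ℕ)) (u, w) =
          if w ∈ t ∧ σ w = u then 1 else 0 := by
      intro u w
      rw [Finsupp.finset_sum_apply]
      have hterm : ∀ i ∈ t,
          (Finsupp.single ((σ i, i) : Fin (m + 2) × Fin (m + 2)) (1 : ℕ)) (u, w) =
            if i = w then (if σ w = u then 1 else 0) else 0 := by
        intro i _
        rw [Finsupp.single_apply]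
        by_cases h : i = w
        · subst h
          by_cases h2 : σ i = u <;> simp [Prod.ext_iff, h2]
        · simp [Prod.ext_iff, h]
      rw [Finset.sum_congr rfl hterm, Finset.sum_ite_eq' t w]
      by_cases h1 : w ∈ t <;> by_cases h2 : σ w = u <;> simp [h1, h2]
    constructor
    · intro hsum
      have e1 := DFunLike.congr_fun hsum (u1, w1)
      rw [happ, hd1] at e1
      have h1 : w1 ∈ t ∧ σ w1 = u1 := by
        by_contra hc; rw [if_neg hc] at e1; omega
      have e2 := DFunLike.congr_fun hsum (u2, w2)
      rw [happ, hd2] at e2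
      have h2 : w2 ∈ t ∧ σ w2 = u2 := by
        by_contra hc; rw [if_neg hc] at e2; omega
      refine ⟨h1.2, h2.2, ?_⟩
      apply Finset.Subset.antisymm
      · intro i hi
        by_contra hni
        simp only [Finset.mem_insert, Finset.mem_singleton] at hni
        push_neg at hni
        have e3 := DFunLike.congr_fun hsum (σ i, i)
        rw [happ, hd0 (σ i) i hni.1 hni.2, if_pos ⟨hi, rfl⟩] at e3
        omega
      · intro i hi
        simp only [Finset.mem_insert, Finset.mem_singleton] at hi
        rcases hi with rfl | rfl
        · exact h1.1
        · exact h2.1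
    · rintro ⟨h1, h2, rfl⟩
      rw [Finset.sum_pair hw, h1, h2, hd]
  -- Step 1: the coefficient equals det A
  have step1 : MvPolynomial.coeff d N.det = A.det := by
    rw [Matrix.det_apply, Matrix.det_apply, MvPolynomial.coeff_sum]
    refine Finset.sum_congr rfl fun σ _ => ?_
    rw [MvPolynomial.coeff_smul]
    congr 1
    have hentry : ∀ i : Fin (m + 2),
        N (σ i) i =
          MvPolynomial.X ((σ i, i) : Fin (m + 2) × Fin (m + 2)) +
            MvPolynomial.C (-(M (σ i) i)) := by
      intro i
      rw [hN]
      simp [Matrix.sub_apply, Matrix.map_apply, sub_eq_add_neg]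
    simp_rw [hentry]
    rw [Finset.prod_add]
    have hterm : ∀ t ∈ Finset.univ.powerset,
        (∏ i ∈ t, MvPolynomial.X ((σ i, i) : Fin (m + 2) × Fin (m + 2))) *
            ∏ i ∈ Finset.univ \ t, MvPolynomial.C (-(M (σ i) i)) =
          MvPolynomial.monomial
            (∑ i ∈ t, Finsupp.single ((σ i, i) : Fin (m + 2) × Fin (m + 2)) (1 : ℕ))
            (∏ i ∈ Finset.univ \ t, (-(M (σ i) i))) := by
      intro t _
      rw [prod_X_eq_monomial, ← map_prod (MvPolynomial.C (R := ℤ)), mul_comm,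
        MvPolynomial.C_mul_monomial, mul_one]
    rw [Finset.sum_congr rfl hterm, MvPolynomial.coeff_sum]
    simp_rw [MvPolynomial.coeff_monomial]
    by_cases hσ : σ w1 = u1 ∧ σ w2 = u2
    · obtain ⟨h1, h2⟩ := hσ
      rw [Finset.sum_eq_single_of_mem ({w1, w2} : Finset (Fin (m + 2)))
          (Finset.mem_powerset.2 (Finset.subset_univ _))
          (fun t _ hne => if_neg (fun hc => hne (((hcond σ t).1 hc).2.2)))]
      rw [if_pos ((hcond σ _).2 ⟨h1, h2, rfl⟩)]
      rw [← Finset.prod_sdiff (Finset.subset_univ ({w1, w2} : Finset (Fin (m + 2))))]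
      have hpair : ∏ i ∈ ({w1, w2} : Finset (Fin (m + 2))), A (σ i) i = 1 := by
        rw [Finset.prod_pair hw, h1, h2, hAu1, hAu2, Pi.single_eq_same, Pi.single_eq_same,
          mul_one]
      rw [hpair, mul_one]
      refine Finset.prod_congr rfl fun i hi => ?_
      simp only [Finset.mem_sdiff, Finset.mem_insert, Finset.mem_singleton] at hi
      push_neg at hi
      have hi1 : σ i ≠ u1 := fun hc => hi.2.1 (σ.injective (by rw [hc, h1]))
      have hi2 : σ i ≠ u2 := fun hc => hi.2.2 (σ.injective (by rw [hc, h2]))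
      rw [hAother (σ i) hi1 hi2]
    · rw [Finset.sum_eq_zero (fun t _ => if_neg (fun hc => hσ ⟨((hcond σ t).1 hc).1,
        ((hcond σ t).1 hc).2.1⟩))]
      symm
      rcases not_and_or.1 hσ with h | h
      · refine Finset.prod_eq_zero (Finset.mem_univ (σ.symm u1)) ?_
        rw [σ.apply_symm_apply, hAu1, Pi.single_eq_of_ne]
        intro hc
        exact h (by rw [← hc, σ.apply_symm_apply])
      · refine Finset.prod_eq_zero (Finset.mem_univ (σ.symm u2)) ?_
        rw [σ.apply_symm_apply, hAu2, Pi.single_eq_of_ne]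
        intro hc
        exact h (by rw [← hc, σ.apply_symm_apply])
  -- abbreviations for the positions
  set pA : Fin (m + 1) := posAfter u1 u2 with hpAdef
  set pW : Fin (m + 1) := posAfter w1 w2 with hpWdef
  have hpA : u1.succAbove pA = u2 := succAbove_posAfter u1 u2 hu'
  have hpW : w1.succAbove pW = w2 := succAbove_posAfter w1 w2 hw'
  set B : Matrix (Fin (m + 1)) (Fin (m + 1)) ℤ := A.submatrix u1.succAbove w1.succAbove with hB
  -- Step 2: expand det A along row u1
  have step2 : A.det = (-1 : ℤ) ^ (u1.val + w1.val) * B.det := by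
    rw [Matrix.det_succ_row A u1,
      Finset.sum_eq_single_of_mem w1 (Finset.mem_univ _)
        (fun j _ hne => by rw [hAu1, Pi.single_eq_of_ne hne, mul_zero, zero_mul])]
    rw [hAu1, Pi.single_eq_same, mul_one]
  -- Step 3: expand det B along row pA
  have hBrow : ∀ j, B pA j = (Pi.single pW 1 : Fin (m + 1) → ℤ) j := by
    intro j
    rw [hB, Matrix.submatrix_apply, hpA, hAu2]
    by_cases h : j = pW
    · subst h; rw [hpW, Pi.single_eq_same, Pi.single_eq_same]
    · rw [Pi.single_eq_of_ne h, Pi.single_eq_of_ne]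
      intro hc
      exact h (Fin.succAbove_right_injective (by rw [hc, hpW]))
  have step3 : B.det = (-1 : ℤ) ^ (pA.val + pW.val) *
      (B.submatrix pA.succAbove pW.succAbove).det := by
    rw [Matrix.det_succ_row B pA,
      Finset.sum_eq_single_of_mem pW (Finset.mem_univ _)
        (fun j _ hne => by rw [hBrow, Pi.single_eq_of_ne hne, mul_zero, zero_mul])]
    rw [hBrow, Pi.single_eq_same, mul_one]
  -- Step 4: the remaining submatrix
  have step4 : B.submatrix pA.succAbove pW.succAbove =
      -(M.submatrix (u1.succAbove ∘ pA.succAbove) (w1.succAbove ∘ pW.succAbove)) := by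
    ext k l
    rw [hB]
    simp only [Matrix.submatrix_apply, Matrix.neg_apply, Function.comp_apply]
    have hr1 : u1.succAbove (pA.succAbove k) ≠ u1 := Fin.succAbove_ne u1 _
    have hr2 : u1.succAbove (pA.succAbove k) ≠ u2 := by
      rw [← hpA]
      exact fun hc => Fin.succAbove_ne pA k (Fin.succAbove_right_injective hc)
    rw [hAother _ hr1 hr2]
  have step5 : (B.submatrix pA.succAbove pW.succAbove).det =
      (-1 : ℤ) ^ m *
        (M.submatrix (u1.succAbove ∘ pA.succAbove) (w1.succAbove ∘ pW.succAbove)).det := by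
    rw [step4, Matrix.det_neg, Fintype.card_fin]
  rw [step1, step2, step3, step5]
  ring
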